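/- Let α > 0 be a Hermitian (positive definite) n×n matrix given in diagonalized form as the identity, and let β be a positive semidefinite diagonal matrix with entries βⱼ ∈ [0,1]. Then for every k ∈ {0,...,n}: (1/binom(n,n−k)) Σ_{|L|=n−k} ∏_{j∈L}(1−βⱼ) ≥ 1 − ((n−k)/n) Σ_{j=1}^n βⱼ. Equivalently, in form language: (α−β)^{n−k}∧α^k ≥ α^n − (n−k)·α^{n−1}∧β pointwise. -/

import Mathlib

open Finset

lemma weier {n : ℕ} (s : Finset (Fin n)) (β : Fin n → ℝ) (hβ : ∀ j, β j ∈ Set.Icc (0:ℝ) 1) :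
    1 - ∑ j ∈ s, β j ≤ ∏ j ∈ s, (1 - β j) := by
  classical
  induction s using Finset.induction with
  | empty => simp
  | @insert a s h ih =>
    rw [Finset.sum_insert h, Finset.prod_insert h]
    have h1 := (hβ a).1
    have h2 := (hβ a).2
    nlinarith [Finset.sum_nonneg (fun j _ => (hβ j).1 : ∀ j ∈ s, 0 ≤ β j)]

lemma count_lemma (n m : ℕ) (hm : 1 ≤ m) (j : Fin n) :
    #((Finset.powersetCard m (univ : Finset (Fin n))).filter (j ∈ ·)) = (n-1).choose (m-1) := by
  classical
  have hcard : #((univ : Finset (Fin n)).erase j) = n - 1 := by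
    simp [Finset.card_erase_of_mem]
  rw [show (n-1).choose (m-1) = #(Finset.powersetCard (m-1) ((univ : Finset (Fin n)).erase j)) by
    rw [Finset.card_powersetCard, hcard]]
  · apply Finset.card_bij (fun L _ => L.erase j)
    · intro L hL
      simp only [mem_filter, Finset.mem_powersetCard] at hL ⊢
      refine ⟨fun x hx => Finset.mem_erase.2 ⟨(Finset.mem_erase.1 hx).1, Finset.mem_univ _⟩, ?_⟩
      rw [Finset.card_erase_of_mem hL.2, hL.1.2]
    · intro L₁ h₁ L₂ h₂ he
      simp only [mem_filter] at h₁ h₂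
      rw [← Finset.insert_erase h₁.2, ← Finset.insert_erase h₂.2, he]
    · intro M hM
      rw [Finset.mem_powersetCard] at hM
      refine ⟨insert j M, ?_, ?_⟩
      · have hjM : j ∉ M := fun h => (Finset.mem_erase.1 (hM.1 h)).1 rfl
        simp only [mem_filter, Finset.mem_powersetCard]
        refine ⟨⟨Finset.subset_univ _, ?_⟩, Finset.mem_insert_self _ _⟩
        rw [Finset.card_insert_of_notMem hjM, hM.2]
        omega
      · have hjM : j ∉ M := fun h => (Finset.mem_erase.1 (hM.1 h)).1 rfl
        rw [Finset.erase_insert hjM]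

theorem alpha_beta_nef_angles_coord (n : ℕ) (hn : 0 < n) (k : ℕ) (hk : k ≤ n)
    (β : Fin n → ℝ) (hβ : ∀ j, β j ∈ Set.Icc (0 : ℝ) 1) :
    ((1 : ℝ) / (n.choose (n - k) : ℝ)) *
      ∑ L ∈ Finset.powersetCard (n - k) (Finset.univ : Finset (Fin n)),
        ∏ j ∈ L, (1 - β j)
    ≥ 1 - (((n : ℝ) - (k : ℝ)) / (n : ℝ)) * ∑ j, β j := by
  classical
  set m := n - k with hm
  rcases Nat.eq_zero_or_pos m with hm0 | hm1
  · have hkn : k = n := by omega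
    subst hkn
    simp [hm0]
  -- notation
  set P := Finset.powersetCard m (Finset.univ : Finset (Fin n)) with hP
  set S := ∑ j, β j with hS
  have hC : (0:ℝ) < (n.choose m : ℝ) := by
    exact_mod_cast Nat.choose_pos (by omega)
  -- double counting
  have hswap : ∑ L ∈ P, ∑ j ∈ L, β j = ((n-1).choose (m-1) : ℝ) * S := by
    have h1 : ∀ L ∈ P, ∑ j ∈ L, β j = ∑ j : Fin n, if j ∈ L then β j else 0 := by
      intro L _
      rw [Finset.sum_ite_mem, Finset.univ_inter]
    rw [Finset.sum_congr rfl h1, Finset.sum_comm, hS, Finset.mul_sum]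
    refine Finset.sum_congr rfl fun j _ => ?_
    rw [← Finset.sum_filter, Finset.sum_const, count_lemma n m hm1 j, nsmul_eq_mul]
  -- lower bound on the sum
  have hT : (n.choose m : ℝ) - ((n-1).choose (m-1) : ℝ) * S ≤ ∑ L ∈ P, ∏ j ∈ L, (1 - β j) := by
    calc (n.choose m : ℝ) - ((n-1).choose (m-1) : ℝ) * S
        = ∑ L ∈ P, (1 - ∑ j ∈ L, β j) := by
          rw [Finset.sum_sub_distrib, Finset.sum_const, hswap, hP,
            Finset.card_powersetCard, Finset.card_univ, Fintype.card_fin, nsmul_eq_mul, mul_one]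
      _ ≤ ∑ L ∈ P, ∏ j ∈ L, (1 - β j) :=
          Finset.sum_le_sum fun L _ => weier L β hβ
  -- choose identity
  have hid : (n : ℝ) * ((n-1).choose (m-1) : ℝ) = (n.choose m : ℝ) * m := by
    have := Nat.add_one_mul_choose_eq (n-1) (m-1)
    have h1 : n - 1 + 1 = n := by omega
    have h2 : m - 1 + 1 = m := by omega
    rw [h1, h2] at this
    exact_mod_cast this
  have hcast : ((n : ℝ) - (k : ℝ)) = (m : ℝ) := by
    rw [hm, Nat.cast_sub hk]
  rw [ge_iff_le, hcast]
  have hn' : (0:ℝ) < n := by exact_mod_cast hn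
  have heq : 1 - (m : ℝ) / n * S
      = (1 / (n.choose m : ℝ)) * ((n.choose m : ℝ) - ((n-1).choose (m-1) : ℝ) * S) := by
    field_simp
    linear_combination S * hid
  rw [heq]
  exact mul_le_mul_of_nonneg_left hT (by positivity)
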